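/- Let B be a blocking set in a finite projective plane of order q ≥ 2 that does not contain all the points of any line. Then |B| ≥ q + √q + 1 (as real numbers). Moreover, if |B| = q + √q + 1, then q is a perfect square, say q = m^2, and every line of the plane meets B in either 1 or m + 1 points (i.e., B is a Baer subplane). -/

import Mathlib

open Configuration

/-- Bruen's theorem: a non-trivial blocking set in a projective plane of order `q` has
at least `q + √q + 1` points; in case of equality `q` is a square and the blocking set
is a Baer subplane. -/
theorem bruen_blocking_set (P L : Type) [Membership P L] [ProjectivePlane P L]
    [Finite P] [Finite L] (q : ℕ) (hq : 2 ≤ q) (horder : ProjectivePlane.order P L = q)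
    (B : Set P)
    (hblock : ∀ l : L, ∃ x ∈ B, x ∈ l)
    (hnoline : ∀ l : L, ∃ x : P, x ∈ l ∧ x ∉ B) :
    (B.ncard : ℝ) ≥ q + Real.sqrt q + 1 ∧
    ((B.ncard : ℝ) = q + Real.sqrt q + 1 →
      ∃ m : ℕ, q = m ^ 2 ∧
        ∀ l : L, Set.ncard {x ∈ B | x ∈ l} = 1 ∨ Set.ncard {x ∈ B | x ∈ l} = m + 1) := by
  classical
  haveI : Fintype P := Fintype.ofFinite P
  haveI : Fintype L := Fintype.ofFinite L
  haveI : Nonempty L := by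
    rw [← Fintype.card_pos_iff, ProjectivePlane.card_lines P L]; positivity
  have hBfin : B.Finite := Set.toFinite B
  set Bf : Finset P := hBfin.toFinset with hBf
  have hmemBf : ∀ x, x ∈ Bf ↔ x ∈ B := fun x => hBfin.mem_toFinset
  set k : ℕ := Bf.card with hk
  have hncard : B.ncard = k := Set.ncard_eq_toFinset_card B hBfin
  set S : L → Finset P := fun l => Bf.filter (· ∈ l) with hS
  set t : L → ℕ := fun l => (S l).card with ht
  -- each line is blocked
  have ht1 : ∀ l, 1 ≤ t l := by
    intro l
    obtain ⟨x, hxB, hxl⟩ := hblock l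
    exact Finset.card_pos.mpr ⟨x, by simp [hS, hmemBf, hxB, hxl]⟩
  -- lineCount as a filter card
  have hlc : ∀ x : P, (Finset.univ.filter (fun l : L => x ∈ l)).card = q + 1 := by
    intro x
    have := ProjectivePlane.lineCount_eq L x
    rw [horder] at this
    rw [← this, lineCount, Nat.card_eq_fintype_card, Fintype.card_subtype]
  -- upper bound: t l + q ≤ k
  have htub : ∀ l, t l + q ≤ k := by
    intro l
    obtain ⟨x, hxl, hxB⟩ := hnoline l
    set T : Finset L := (Finset.univ.filter (fun l' : L => x ∈ l')).erase l with hT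
    have hTcard : T.card = q := by
      rw [hT, Finset.card_erase_of_mem (by simp [hxl]), hlc x]
      omega
    set g : L → P := fun l' => (hblock l').choose with hg
    have hgB : ∀ l', g l' ∈ B := fun l' => (hblock l').choose_spec.1
    have hgl : ∀ l', g l' ∈ l' := fun l' => (hblock l').choose_spec.2
    have hgnotl : ∀ l' ∈ T, g l' ∉ l := by
      intro l' hl' hgll
      rw [hT, Finset.mem_erase, Finset.mem_filter] at hl'
      rcases Nondegenerate.eq_or_eq (hgl l') hl'.2.2 hgll hxl with h | h
      · exact hxB (h ▸ hgB l')
      · exact hl'.1 h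
    have hginj : Set.InjOn g ↑T := by
      intro l₁ h₁ l₂ h₂ he
      by_contra hne
      rw [hT, Finset.coe_erase, Set.mem_diff] at h₁ h₂
      have h₁' : x ∈ l₁ := by simpa using h₁.1
      have h₂' : x ∈ l₂ := by simpa using h₂.1
      rcases Nondegenerate.eq_or_eq (hgl l₁) h₁' (he ▸ hgl l₂) h₂' with h | h
      · exact hxB (h ▸ hgB l₁)
      · exact hne h
    have hdisj : Disjoint (S l) (T.image g) := by
      rw [Finset.disjoint_right]
      intro y hy hyS
      obtain ⟨l', hl', rfl⟩ := Finset.mem_image.mp hy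
      rw [hS] at hyS
      exact hgnotl l' hl' (Finset.mem_filter.mp hyS).2
    have hsub : S l ∪ T.image g ⊆ Bf := by
      intro y hy
      rcases Finset.mem_union.mp hy with h | h
      · exact (Finset.mem_filter.mp h).1
      · obtain ⟨l', _, rfl⟩ := Finset.mem_image.mp h
        exact (hmemBf _).mpr (hgB l')
    calc t l + q = (S l ∪ T.image g).card := by
          rw [Finset.card_union_of_disjoint hdisj, Finset.card_image_of_injOn hginj, hTcard]
      _ ≤ k := Finset.card_le_card hsub
  -- k ≥ q + 1
  have hkq : q + 1 ≤ k := by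
    have := htub (Classical.arbitrary L)
    have := ht1 (Classical.arbitrary L)
    omega
  set r : ℕ := k - (q + 1) with hr
  have hkr : k = q + 1 + r := by omega
  have htub' : ∀ l, t l ≤ r + 1 := fun l => by have := htub l; omega
  -- sum of t = k (q+1)
  have hsum1 : ∑ l : L, t l = k * (q + 1) := by
    have step : ∀ l : L, t l = ∑ x ∈ Bf, if x ∈ l then 1 else 0 := fun l => by
      simp only [ht, hS, Finset.card_filter]
    calc ∑ l : L, t l = ∑ l : L, ∑ x ∈ Bf, (if x ∈ l then 1 else 0) :=
          Finset.sum_congr rfl fun l _ => step l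
      _ = ∑ x ∈ Bf, ∑ l : L, (if x ∈ l then 1 else 0) := Finset.sum_comm
      _ = ∑ x ∈ Bf, (q + 1) := Finset.sum_congr rfl fun x _ => by
            rw [← Finset.card_filter]; exact hlc x
      _ = k * (q + 1) := by rw [Finset.sum_const, smul_eq_mul, hk]
  -- sum of t(t-1) = k(k-1), via offDiag fibering
  have hsum2 : ∑ l : L, (S l).offDiag.card = Bf.offDiag.card := by
    have hline : ∀ p : P × P, p.1 ≠ p.2 → ∃! l : L, p.1 ∈ l ∧ p.2 ∈ l :=
      fun p hp => HasLines.existsUnique_line P L p.1 p.2 hp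
    set f : P × P → L := fun p => if h : p.1 ≠ p.2 then (hline p h).choose
      else Classical.arbitrary L with hf
    rw [Finset.card_eq_sum_card_fiberwise (f := f) (t := Finset.univ)
      (fun x _ => Finset.mem_univ _)]
    refine Finset.sum_congr rfl fun l _ => ?_
    congr 1
    ext p
    rw [Finset.mem_filter, Finset.mem_offDiag, Finset.mem_offDiag]
    simp only [hS, Finset.mem_filter]
    constructor
    · rintro ⟨⟨h1, h1l⟩, ⟨h2, h2l⟩, hne⟩
      refine ⟨⟨h1, h2, hne⟩, ?_⟩
      rw [hf]
      simp only [dif_pos hne]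
      exact ((hline p hne).choose_spec.2 l ⟨h1l, h2l⟩).symm
    · rintro ⟨⟨h1, h2, hne⟩, hfl⟩
      rw [hf] at hfl
      simp only [dif_pos hne] at hfl
      have := (hline p hne).choose_spec.1
      rw [hfl] at this
      exact ⟨⟨h1, this.1⟩, ⟨h2, this.2⟩, hne⟩
  have hsum2' : ∑ l : L, ((t l : ℤ) * (t l - 1)) = (k : ℤ) * (k - 1) := by
    have h1 : ∀ l : L, ((S l).offDiag.card : ℤ) = (t l : ℤ) * (t l - 1) := by
      intro l
      rw [Finset.offDiag_card]
      have : (S l).card ≤ (S l).card * (S l).card := Nat.le_mul_of_pos_left _ (ht1 l)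
      rw [Nat.cast_sub this]; push_cast
      ring
    have h2 : (Bf.offDiag.card : ℤ) = (k : ℤ) * (k - 1) := by
      rw [Finset.offDiag_card]
      have : Bf.card ≤ Bf.card * Bf.card := Nat.le_mul_of_pos_left _ (by omega)
      rw [Nat.cast_sub this]; push_cast
      ring
    calc ∑ l : L, ((t l : ℤ) * (t l - 1)) = ∑ l : L, ((S l).offDiag.card : ℤ) :=
          Finset.sum_congr rfl fun l _ => (h1 l).symm
      _ = ((∑ l : L, (S l).offDiag.card : ℕ) : ℤ) := by push_cast; ring
      _ = (k : ℤ) * (k - 1) := by rw [hsum2]; exact h2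
  -- number of lines
  have hcardL : (Fintype.card L : ℤ) = (q : ℤ)^2 + q + 1 := by
    rw [ProjectivePlane.card_lines P L, horder]; push_cast; ring
  -- the key sum
  set E : L → ℤ := fun l => ((t l : ℤ) - 1) * ((r + 1 : ℤ) - t l) with hE
  have hEnonneg : ∀ l, 0 ≤ E l := by
    intro l
    have h1 := ht1 l
    have h2 := htub' l
    have h1' : (1 : ℤ) ≤ t l := by exact_mod_cast h1
    have h2' : (t l : ℤ) ≤ r + 1 := by exact_mod_cast h2
    simp only [hE]
    nlinarith
  have hEsum : ∑ l : L, E l = (q : ℤ) * ((r : ℤ)^2 - q) := by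
    have expand : ∀ l, E l = ((r : ℤ) + 2) * t l - ((t l : ℤ) * (t l - 1) + t l)
        - ((r : ℤ) + 1) := by
      intro l; simp only [hE]; ring
    rw [Finset.sum_congr rfl fun l _ => expand l]
    rw [Finset.sum_sub_distrib, Finset.sum_sub_distrib, Finset.sum_add_distrib,
      ← Finset.mul_sum, hsum2', Finset.sum_const, Finset.card_univ]
    have hst : ∑ l : L, (t l : ℤ) = (k : ℤ) * (q + 1) := by
      calc ∑ l : L, (t l : ℤ) = ((∑ l : L, t l : ℕ) : ℤ) := by push_cast; ring
        _ = _ := by rw [hsum1]; push_cast; ring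
    rw [hst]
    have hkr' : (k : ℤ) = (q : ℤ) + 1 + r := by exact_mod_cast hkr
    rw [hkr']
    rw [nsmul_eq_mul, hcardL]
    ring
  have hsumnonneg : 0 ≤ ∑ l : L, E l := Finset.sum_nonneg fun l _ => hEnonneg l
  have hrq : (q : ℤ) ≤ (r : ℤ)^2 := by
    rw [hEsum] at hsumnonneg
    nlinarith [show (0:ℤ) < q by exact_mod_cast Nat.lt_of_lt_of_le Nat.zero_lt_two hq]
  have hrq' : q ≤ r^2 := by exact_mod_cast hrq
  have hsqrt : Real.sqrt q ≤ r := by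
    calc Real.sqrt q ≤ Real.sqrt ((r:ℝ)^2) :=
          Real.sqrt_le_sqrt (by exact_mod_cast hrq')
      _ = r := Real.sqrt_sq (by positivity)
  constructor
  · rw [hncard]
    have : (k : ℝ) = q + 1 + r := by exact_mod_cast hkr
    rw [this]
    linarith
  · intro heq
    rw [hncard] at heq
    have hkR : (k : ℝ) = q + 1 + r := by exact_mod_cast hkr
    have hreq : (r : ℝ) = Real.sqrt q := by linarith
    have hq2 : ((r : ℝ))^2 = q := by rw [hreq]; exact Real.sq_sqrt (by positivity)
    have hqm : q = r^2 := by exact_mod_cast hq2.symm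
    refine ⟨r, hqm, fun l => ?_⟩
    -- each E l = 0
    have hEzero : ∀ l : L, E l = 0 := by
      have : ∑ l : L, E l = 0 := by
        rw [hEsum]
        have : (q : ℤ) = (r : ℤ)^2 := by exact_mod_cast hqm
        rw [this]; ring
      exact fun l => (Finset.sum_eq_zero_iff_of_nonneg fun l _ => hEnonneg l).mp this l
        (Finset.mem_univ l)
    have hEl := hEzero l
    simp only [hE] at hEl
    rcases mul_eq_zero.mp hEl with h | h
    all_goals
      have hset : {x ∈ B | x ∈ l} = ↑(S l) := by
        ext x
        simp [hS, hmemBf, Set.mem_setOf_eq]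
    · left
      rw [hset, Set.ncard_coe_finset]
      have : (t l : ℤ) = 1 := by linarith [sub_eq_zero.mp h]
      exact_mod_cast this
    · right
      rw [hset, Set.ncard_coe_finset]
      have : (t l : ℤ) = r + 1 := by linarith [sub_eq_zero.mp h]
      exact_mod_cast this
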